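/- If the enhancement e : V → ℤ/4 is improper, i.e. there exists x in the radical V^⊥ = {x : b(x,y)=0 for all y} with e(x) ≠ 0, then the Gauss sum γ(V) = ∑_{v∈V} i^{e(v)} equals 0. -/
import Mathlib


/-- The nontrivial homomorphism `ZMod 2 → ZMod 4`, sending `1` to `2`. -/
def twice (a : ZMod 2) : ZMod 4 := 2 * a.val

open Complex in
lemma I_pow_mod (n : ℕ) : I ^ n = I ^ (n % 4) := by
  conv_lhs => rw [← Nat.div_add_mod n 4]
  rw [pow_add, pow_mul, I_pow_four, one_pow, one_mul]

open Complex in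
lemma I_pow_val_add (a c : ZMod 4) : I ^ (a + c).val = I ^ a.val * I ^ c.val := by
  rw [ZMod.val_add, ← I_pow_mod, pow_add]

open Complex in
theorem gauss_sum_improper_eq_zero (V : Type*) [AddCommGroup V] [Module (ZMod 2) V]
    [Fintype V]
    (b : V →ₗ[ZMod 2] V →ₗ[ZMod 2] ZMod 2) (hsymm : ∀ x y, b x y = b y x)
    (e : V → ZMod 4)
    (he : ∀ x y, e (x + y) = e x + e y + twice (b x y))
    (x : V) (hrad : ∀ y, b x y = 0) (hex : e x ≠ 0) :
    ∑ v : V, I ^ (e v).val = 0 := by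
  have htw0 : twice 0 = 0 := by decide
  have he0 : e 0 = 0 := by
    have := he 0 0
    simp [map_zero, htw0] at this
    exact this
  have hxx : x + x = 0 := by
    have h2 : (2 : ZMod 2) = 0 := by decide
    rw [← two_smul (ZMod 2) x, h2, zero_smul]
  have hex2 : e x = 2 := by
    have h := he x x
    rw [hxx, he0, hrad x, htw0, add_zero] at h
    have h' : e x + e x = 0 := h.symm
    have key : ∀ a : ZMod 4, a ≠ 0 → a + a = 0 → a = 2 := by decide
    exact key _ hex h'
  have hkey : ∑ v : V, I ^ (e v).val = I ^ (e x).val * ∑ v : V, I ^ (e v).val := by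
    conv_lhs => rw [← Equiv.sum_comp (Equiv.addRight x) (fun v => I ^ (e v).val)]
    rw [Finset.mul_sum]
    apply Finset.sum_congr rfl
    intro v _
    have : e (v + x) = e x + e v := by
      rw [he v x, hsymm, hrad, htw0, add_zero, add_comm]
    simp only [Equiv.coe_addRight, this, I_pow_val_add]
  rw [hex2] at hkey
  have : (2 : ZMod 4).val = 2 := by decide
  rw [this] at hkey
  have hI2 : I ^ 2 = -1 := I_sq
  rw [hI2, neg_one_mul] at hkey
  have h2 : (∑ v : V, I ^ (e v).val) + ∑ v : V, I ^ (e v).val = 0 := by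
    linear_combination hkey
  exact add_self_eq_zero.mp h2
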